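/- Let (X_1,Y_1),…,(X_n,Y_n),(X,Y) be i.i.d. samples from a distribution on 𝒳×𝒴 and let S : 𝒳×𝒴 → (0,1] be a measurable score function; set s_i = S(X_i,Y_i). Fix ε > 0, α ∈ (0,1), γ ∈ (0,1), and set q̃ = (n+1)(1−α)/(n(1−γα)) + (2/(εn))·log(m/(γα)); assume 1/2 ≤ q̃ < 1. Let ŝ be the output of the private quantile mechanism applied to s_1,…,s_n with level q̃ and privacy parameter ε, drawn conditionally independently of (X,Y) given s_1,…,s_n. Then the prediction set C(x) = {y : S(x,y) ≤ ŝ} satisfies P(Y ∈ C(X)) = P(S(X,Y) ≤ ŝ) ≥ 1 − α, where the probability is over the calibration data, the mechanism's randomness, and (X,Y). -/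

import Mathlib

open MeasureTheory ProbabilityTheory

/-- The weight assigned to bin edge `e j` by the private quantile mechanism run at
quantile level `q` on the (discretized) scores `d ∘ v`. -/
noncomputable def quantWeight {n : ℕ} (e : ℕ → ℝ) (d : ℝ → ℝ) (q : ℝ)
    (v : Fin n → ℝ) (j : ℕ) : ℝ :=
  max ((Set.ncard {i : Fin n | d (v i) < e j} : ℝ) / q)
      ((Set.ncard {i : Fin n | e j < d (v i)} : ℝ) / (1 - q))

/-- The probability that the private quantile mechanism (exponential mechanism with
privacy level `ε`) outputs the bin edge `e j`. -/
noncomputable def mechProb (m : ℕ) {n : ℕ} (e : ℕ → ℝ) (d : ℝ → ℝ) (q ε : ℝ)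
    (v : Fin n → ℝ) (j : ℕ) : ℝ :=
  Real.exp (-(ε / 2) * quantWeight e d q v j) /
    ∑ j' ∈ Finset.Icc 1 m, Real.exp (-(ε / 2) * quantWeight e d q v j')

open scoped ENNReal Classical

/-- Measurable surrogate for the discretization map. -/
noncomputable def ddisc (m : ℕ) (e : ℕ → ℝ) (s : ℝ) : ℝ :=
  ∑ j ∈ Finset.Icc 1 m, if e (j - 1) < s ∧ s ≤ e j then e j else 0

lemma ddisc_measurable (m : ℕ) (e : ℕ → ℝ) : Measurable (ddisc m e) := by
  refine Finset.measurable_sum _ fun j _ => Measurable.ite ?_ measurable_const measurable_const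
  have : {s : ℝ | e (j - 1) < s ∧ s ≤ e j} = Set.Ioc (e (j - 1)) (e j) := rfl
  rw [this]; exact measurableSet_Ioc

lemma ddisc_eq_of_mem (m j : ℕ) (e : ℕ → ℝ) (hj1 : 1 ≤ j) (hjm : j ≤ m)
    (hmono' : ∀ a b : ℕ, a ≤ b → b ≤ m → e a ≤ e b) {s : ℝ}
    (h1 : e (j - 1) < s) (h2 : s ≤ e j) : ddisc m e s = e j := by
  rw [ddisc, Finset.sum_eq_single_of_mem j (Finset.mem_Icc.mpr ⟨hj1, hjm⟩)]
  · rw [if_pos ⟨h1, h2⟩]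
  · intro j' hj' hne
    obtain ⟨hj'1, hj'm⟩ := Finset.mem_Icc.mp hj'
    rw [if_neg]
    rintro ⟨ha, hb⟩
    rcases lt_or_gt_of_ne hne with hlt | hgt
    · have : e j' ≤ e (j - 1) := hmono' j' (j - 1) (by omega) (by omega)
      linarith
    · have : e j ≤ e (j' - 1) := hmono' j (j' - 1) (by omega) (by omega)
      linarith

/-- Counting lemma: at most `t` indices can have at most `t` values (weakly) above them. -/
lemma count_above_le {N t : ℕ} (x : Fin N → ℝ) :
    (Finset.univ.filter fun i : Fin N =>
      (Finset.univ.filter fun l => x i ≤ x l).card ≤ t).card ≤ t := by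
  by_contra h
  push_neg at h
  set B := Finset.univ.filter fun i : Fin N =>
      (Finset.univ.filter fun l => x i ≤ x l).card ≤ t with hB
  have hBne : B.Nonempty := Finset.card_pos.mp (lt_of_le_of_lt (Nat.zero_le t) h)
  obtain ⟨i₀, hi₀B, hmin⟩ := Finset.exists_min_image B x hBne
  have hsub : B ⊆ Finset.univ.filter fun l => x i₀ ≤ x l := fun i hi =>
    Finset.mem_filter.mpr ⟨Finset.mem_univ _, hmin i hi⟩
  have h1 := Finset.card_le_card hsub
  have h2 : (Finset.univ.filter fun l => x i₀ ≤ x l).card ≤ t :=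
    (Finset.mem_filter.mp hi₀B).2
  omega

/-- The joint law of finitely many independent random variables is the product measure. -/
lemma iid_map_eq_pi {Ω : Type*} [MeasurableSpace Ω] (μ : Measure Ω) [IsProbabilityMeasure μ]
    {N : ℕ} (T : Fin N → Ω → ℝ) (hT : ∀ i, Measurable (T i))
    (hind : iIndepFun T μ) :
    μ.map (fun ω i => T i ω) = Measure.pi (fun i => μ.map (T i)) := by
  haveI : ∀ i, IsProbabilityMeasure (μ.map (T i)) := fun i =>
    Measure.isProbabilityMeasure_map (hT i).aemeasurable
  refine (Measure.pi_eq fun s hs => ?_).symm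
  rw [Measure.map_apply (measurable_pi_lambda _ hT) (MeasurableSet.univ_pi hs)]
  have hpre : (fun ω i => T i ω) ⁻¹' Set.univ.pi s = ⋂ i ∈ Finset.univ, T i ⁻¹' s i := by
    ext ω; simp [Set.mem_pi]
  rw [hpre, hind.measure_inter_preimage_eq_mul Finset.univ (fun i _ => hs i)]
  exact Finset.prod_congr rfl fun i _ => (Measure.map_apply (hT i) (hs i)).symm

open scoped Classical

/-- Exchangeability bound: for iid real random variables, the probability that at most `t`
of them (weakly) exceed the `i₀`-th one is at most `t / N`. -/
lemma exch_count {Ω : Type*} [MeasurableSpace Ω] (μ : Measure Ω) [IsProbabilityMeasure μ]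
    {N : ℕ} (T : Fin N → Ω → ℝ) (hT : ∀ i, Measurable (T i))
    (hind : iIndepFun T μ)
    (hid : ∀ i j, IdentDistrib (T i) (T j) μ μ) (t : ℕ) (i₀ : Fin N) :
    (N : ℝ≥0∞) * μ {ω | (Finset.univ.filter fun l => T i₀ ω ≤ T l ω).card ≤ t} ≤ t := by
  set τ := μ.map (T i₀) with hτdef
  haveI : IsProbabilityMeasure τ := Measure.isProbabilityMeasure_map (hT i₀).aemeasurable
  have hτ : ∀ i, μ.map (T i) = τ := fun i => (hid i i₀).map_eq
  have hpi : μ.map (fun ω i => T i ω) = Measure.pi (fun _ : Fin N => τ) := by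
    rw [iid_map_eq_pi μ T hT hind]
    exact congrArg Measure.pi (funext hτ)
  set G : Fin N → Set (Fin N → ℝ) :=
    fun i => {x | (Finset.univ.filter fun l => x i ≤ x l).card ≤ t} with hG
  have hGm : ∀ i, MeasurableSet (G i) := by
    intro i
    have hf : Measurable fun x : Fin N → ℝ => ∑ l : Fin N, if x i ≤ x l then (1 : ℕ) else 0 :=
      Finset.measurable_sum _ fun l _ => Measurable.ite
        (measurableSet_le (measurable_pi_apply i) (measurable_pi_apply l))
        measurable_const measurable_const
    have hcf : (fun x : Fin N → ℝ => (Finset.univ.filter fun l => x i ≤ x l).card)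
        = fun x : Fin N → ℝ => ∑ l : Fin N, if x i ≤ x l then (1 : ℕ) else 0 :=
      funext fun x => Finset.card_filter _ _
    have hf' : Measurable fun x : Fin N → ℝ =>
        (Finset.univ.filter fun l => x i ≤ x l).card := by
      rw [hcf]; exact hf
    exact hf' (show MeasurableSet {q : ℕ | q ≤ t} by trivial)
  set J : Ω → (Fin N → ℝ) := fun ω l => T l ω with hJdef
  have hJm : Measurable J := measurable_pi_lambda _ hT
  have hμA : ∀ i, μ (J ⁻¹' G i) = Measure.pi (fun _ : Fin N => τ) (G i) := fun i => by
    rw [← hpi, Measure.map_apply hJm (hGm i)]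
  have hswap : ∀ i, Measure.pi (fun _ : Fin N => τ) (G i)
      = Measure.pi (fun _ : Fin N => τ) (G i₀) := by
    intro i
    set σ : Fin N ≃ Fin N := Equiv.swap i i₀ with hσ
    set Φ := MeasurableEquiv.piCongrLeft (fun _ : Fin N => ℝ) σ with hΦ
    have hΦap : ∀ (x : Fin N → ℝ) (l : Fin N), Φ x l = x (σ.symm l) := by
      intro x l
      have h1 : Φ x (σ (σ.symm l)) = x (σ.symm l) :=
        Equiv.piCongrLeft_apply_apply (fun _ => ℝ) σ x (σ.symm l)
      rwa [Equiv.apply_symm_apply] at h1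
    have hmapΦ : (Measure.pi fun _ : Fin N => τ).map Φ = Measure.pi fun _ : Fin N => τ :=
      Measure.pi_map_piCongrLeft (β := fun _ : Fin N => ℝ) σ (fun _ => τ)
    have hpreim : Φ ⁻¹' G i₀ = G i := by
      ext x
      simp only [hG, Set.mem_preimage, Set.mem_setOf_eq]
      have hcards : (Finset.univ.filter fun l => Φ x i₀ ≤ Φ x l).card
          = (Finset.univ.filter fun l => x i ≤ x l).card := by
        have hxi : Φ x i₀ = x i := by
          rw [hΦap, Equiv.symm_swap, Equiv.swap_apply_right]
        refine Finset.card_bij' (fun l _ => σ.symm l) (fun l _ => σ l) ?_ ?_ ?_ ?_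
        · intro l hl
          rw [Finset.mem_filter] at hl ⊢
          refine ⟨Finset.mem_univ _, ?_⟩
          have := hl.2
          rwa [hxi, hΦap] at this
        · intro l hl
          rw [Finset.mem_filter] at hl ⊢
          refine ⟨Finset.mem_univ _, ?_⟩
          rw [hxi, hΦap, Equiv.symm_apply_apply]
          exact hl.2
        · intro l _; exact Equiv.apply_symm_apply _ _
        · intro l _; exact Equiv.symm_apply_apply _ _
      rw [hcards]
    calc Measure.pi (fun _ : Fin N => τ) (G i)
        = Measure.pi (fun _ : Fin N => τ) (Φ ⁻¹' G i₀) := by rw [hpreim]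
      _ = ((Measure.pi fun _ : Fin N => τ).map Φ) (G i₀) :=
          (Measure.map_apply Φ.measurable (hGm i₀)).symm
      _ = Measure.pi (fun _ : Fin N => τ) (G i₀) := by rw [hmapΦ]
  -- sum of the measures of the events is at most t
  have hsum : ∑ i : Fin N, μ (J ⁻¹' G i) ≤ (t : ℝ≥0∞) := by
    have hAm : ∀ i : Fin N, MeasurableSet (J ⁻¹' G i) := fun i => hJm (hGm i)
    have h1 : ∀ i : Fin N, μ (J ⁻¹' G i)
        = ∫⁻ ω, (J ⁻¹' G i).indicator (fun _ => (1 : ℝ≥0∞)) ω ∂μ := by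
      intro i
      rw [lintegral_indicator_const (hAm i), one_mul]
    calc ∑ i : Fin N, μ (J ⁻¹' G i)
        = ∑ i : Fin N, ∫⁻ ω, (J ⁻¹' G i).indicator (fun _ => (1 : ℝ≥0∞)) ω ∂μ := by
          exact Finset.sum_congr rfl fun i _ => h1 i
      _ = ∫⁻ ω, ∑ i : Fin N, (J ⁻¹' G i).indicator (fun _ => (1 : ℝ≥0∞)) ω ∂μ := by
          rw [lintegral_finset_sum']
          exact fun i _ => (measurable_const.indicator (hAm i)).aemeasurable
      _ ≤ ∫⁻ _, (t : ℝ≥0∞) ∂μ := by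
          refine lintegral_mono fun ω => ?_
          have hcount := count_above_le (t := t) (J ω)
          have hrw : ∑ i : Fin N, (J ⁻¹' G i).indicator (fun _ => (1 : ℝ≥0∞)) ω
              = ((Finset.univ.filter fun i : Fin N =>
                  (Finset.univ.filter fun l => J ω i ≤ J ω l).card ≤ t).card : ℝ≥0∞) := by
            rw [Finset.card_filter]
            push_cast
            refine Finset.sum_congr rfl fun i _ => ?_
            by_cases hmem : ω ∈ J ⁻¹' G i
            · rw [Set.indicator_of_mem hmem, if_pos]
              exact hmem
            · rw [Set.indicator_of_notMem hmem, if_neg]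
              exact hmem
          rw [hrw]
          exact (Nat.cast_le (α := ℝ≥0∞)).mpr hcount
      _ = (t : ℝ≥0∞) := by
          rw [lintegral_const, measure_univ, mul_one]
  have hall : ∀ i, μ (J ⁻¹' G i) = μ (J ⁻¹' G i₀) := fun i => by
    rw [hμA i, hμA i₀, hswap i]
  have hfin : ∑ i : Fin N, μ (J ⁻¹' G i) = (N : ℝ≥0∞) * μ (J ⁻¹' G i₀) := by
    rw [Finset.sum_congr rfl fun i _ => hall i, Finset.sum_const, Finset.card_univ,
      Fintype.card_fin, nsmul_eq_mul]
  have hfinal : (N : ℝ≥0∞) * μ (J ⁻¹' G i₀) ≤ t := by rw [← hfin]; exact hsum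
  exact hfinal

open scoped Classical

set_option maxHeartbeats 4000000 in
/-- **Coverage guarantee of differentially private conformal prediction (lower bound).**
The model: `data 0, …, data (n-1)` are the calibration points, `data (Fin.last n)` is
the test point `(X, Y)`, all i.i.d.; the mechanism's internal randomness lives on a
second probability space `Ω₂` (so the mechanism output is conditionally independent of
the test point given the calibration scores). -/
theorem private_conformal_coverage_lower
    {Ω₁ Ω₂ 𝒳 𝒴 : Type*} [MeasurableSpace Ω₁] [MeasurableSpace Ω₂]
    [MeasurableSpace 𝒳] [MeasurableSpace 𝒴]
    (μ : Measure Ω₁) (ν : Measure Ω₂) [IsProbabilityMeasure μ] [IsProbabilityMeasure ν]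
    (n m : ℕ) (hn : 1 ≤ n) (hm : 1 ≤ m)
    -- the i.i.d. data (X₁,Y₁),…,(Xₙ,Yₙ),(X,Y)
    (data : Fin (n + 1) → Ω₁ → 𝒳 × 𝒴)
    (hdatameas : ∀ i, Measurable (data i))
    (hiid : iIndepFun data μ)
    (hident : ∀ i j, IdentDistrib (data i) (data j) μ μ)
    -- the measurable score function with values in (0,1]
    (S : 𝒳 × 𝒴 → ℝ) (hS : Measurable S) (hSrange : ∀ p, S p ∈ Set.Ioc (0 : ℝ) 1)
    -- the bin edges 0 = e₀ < e₁ < ⋯ < eₘ = 1 and the discretization map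
    (e : ℕ → ℝ) (he0 : e 0 = 0) (hem : e m = 1) (hmono : ∀ j < m, e j < e (j + 1))
    (d : ℝ → ℝ)
    (hd : ∀ s : ℝ, ∀ j : ℕ, 1 ≤ j → j ≤ m → s ∈ Set.Ioc (e (j - 1)) (e j) → d s = e j)
    -- parameters and the adjusted quantile level q̃
    (ε α γ : ℝ) (hε : 0 < ε) (hα : α ∈ Set.Ioo (0 : ℝ) 1) (hγ : γ ∈ Set.Ioo (0 : ℝ) 1)
    (tq : ℝ)
    (htq : tq = ((n : ℝ) + 1) * (1 - α) / (n * (1 - γ * α)) +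
      2 / (ε * n) * Real.log (m / (γ * α)))
    (htq_half : 1 / 2 ≤ tq) (htq_one : tq < 1)
    -- the private quantile mechanism: given a score vector, a random bin edge
    (A : (Fin n → ℝ) → Ω₂ → ℝ)
    (hAmeas : Measurable fun p : (Fin n → ℝ) × Ω₂ => A p.1 p.2)
    (hA : ∀ v : Fin n → ℝ, (∀ i, v i ∈ Set.Ioc (0 : ℝ) 1) →
      ∀ j, 1 ≤ j → j ≤ m →
        ν {ω₂ | A v ω₂ = e j} = ENNReal.ofReal (mechProb m e d tq ε v j)) :
    -- coverage: P(Y ∈ C(X)) = P(S(X,Y) ≤ ŝ) ≥ 1 - α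
    ENNReal.ofReal (1 - α) ≤
      (μ.prod ν) {ω | S (data (Fin.last n) ω.1) ≤
        A (fun i => S (data i.castSucc ω.1)) ω.2} := by
  obtain ⟨hα0, hα1⟩ := hα
  obtain ⟨hγ0, hγ1⟩ := hγ
  have hγα0 : 0 < γ * α := mul_pos hγ0 hα0
  have hγα1 : γ * α < 1 := by nlinarith
  have h1γα : 0 < 1 - γ * α := by linarith
  have hm1 : (1:ℝ) ≤ m := by exact_mod_cast hm
  have hn1 : (1:ℝ) ≤ n := by exact_mod_cast hn
  have htq0 : 0 < tq := lt_of_lt_of_le (by norm_num) htq_half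
  have h1tq0 : 0 < 1 - tq := by linarith
  have hrat : (1:ℝ) ≤ (m:ℝ) / (γ*α) := by
    rw [le_div_iff₀ hγα0]; nlinarith
  set L := Real.log ((m:ℝ)/(γ*α)) with hLdef
  have hL0 : 0 ≤ L := Real.log_nonneg hrat
  set b := 2/ε * L with hbdef
  have hb0 : 0 ≤ b := mul_nonneg (by positivity) hL0
  set base := ((n:ℝ)+1)*(1-α)/(1-γ*α) with hbasedef
  have hbase0 : 0 < base := div_pos (mul_pos (by linarith) (by linarith)) h1γα
  have hntq : (n:ℝ) * tq = base + b := by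
    rw [htq, hbasedef, hbdef]
    have hne : (n:ℝ) ≠ 0 := by linarith
    have hne2 : (1 - γ*α) ≠ 0 := ne_of_gt h1γα
    have hne3 : ε ≠ 0 := ne_of_gt hε
    field_simp
  set c := (n:ℝ)*tq - (1-tq)*b with hcdef
  have hceq : c = base + tq * b := by rw [hcdef, hntq]; ring
  have hc0 : 0 < c := by nlinarith [mul_nonneg htq0.le hb0]
  have hcntq : c ≤ (n:ℝ)*tq := by nlinarith [mul_nonneg h1tq0.le hb0]
  have hcn : c ≤ (n:ℝ) := by nlinarith
  set k := Nat.ceil c with hkdef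
  have hkc : c ≤ (k:ℝ) := Nat.le_ceil c
  have hkn : k ≤ n := Nat.ceil_le.mpr hcn
  set t := n + 1 - k with htdef
  have hkt : k + t = n + 1 := by omega
  -- monotonicity of the bin edges
  have emono : ∀ a b : ℕ, a ≤ b → b ≤ m → e a ≤ e b := by
    intro a b hab hbm
    induction b, hab using Nat.le_induction with
    | base => exact le_refl _
    | succ b hb ih =>
      exact le_trans (ih (by omega)) (le_of_lt (hmono b (by omega)))
  have estrict : ∀ a b : ℕ, a < b → b ≤ m → e a < e b := by
    intro a b' hab hbm
    have h2 : e (b'-1) < e b' := by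
      have := hmono (b'-1) (by omega)
      rwa [Nat.sub_add_cancel (by omega)] at this
    exact lt_of_le_of_lt (emono a (b'-1) (by omega) (by omega)) h2
  have hbin : ∀ s : ℝ, s ∈ Set.Ioc (0:ℝ) 1 →
      ∃ j, 1 ≤ j ∧ j ≤ m ∧ e (j-1) < s ∧ s ≤ e j := by
    intro s hs
    have hex : ∃ j, s ≤ e j := ⟨m, by rw [hem]; exact hs.2⟩
    set j := Nat.find hex with hjdef
    have hsej : s ≤ e j := Nat.find_spec hex
    have hj1 : 1 ≤ j := by
      rcases Nat.eq_zero_or_pos j with h0 | h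
      · exfalso
        rw [h0, he0] at hsej
        exact absurd hsej (not_le.mpr hs.1)
      · exact h
    have hjm : j ≤ m := Nat.find_min' hex (by rw [hem]; exact hs.2)
    have hjlt : e (j-1) < s := by
      have := Nat.find_min hex (show j - 1 < j by omega)
      exact lt_of_not_ge this
    exact ⟨j, hj1, hjm, hjlt, hsej⟩
  have hval : ∀ s : ℝ, s ∈ Set.Ioc (0:ℝ) 1 →
      ∃ j, 1 ≤ j ∧ j ≤ m ∧ d s = e j ∧ ddisc m e s = e j ∧ s ≤ e j := by
    intro s hs
    obtain ⟨j, hj1, hjm, h1, h2⟩ := hbin s hs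
    exact ⟨j, hj1, hjm, hd s j hj1 hjm ⟨h1, h2⟩,
      ddisc_eq_of_mem m j e hj1 hjm emono h1 h2, h2⟩
  -- the discretized scores
  set T : Fin (n+1) → Ω₁ → ℝ := fun i ω => ddisc m e (S (data i ω)) with hTdef
  have hTmeas : ∀ i, Measurable (T i) := fun i =>
    (ddisc_measurable m e).comp (hS.comp (hdatameas i))
  have hTind : iIndepFun T μ :=
    hiid.comp (fun _ => fun p => ddisc m e (S p))
      (fun _ => (ddisc_measurable m e).comp hS)
  have hTid : ∀ i j, IdentDistrib (T i) (T j) μ μ := fun i j =>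
    (hident i j).comp ((ddisc_measurable m e).comp hS)
  have hTfacts : ∀ i ω, S (data i ω) ≤ T i ω ∧
      ∃ j, 1 ≤ j ∧ j ≤ m ∧ T i ω = e j ∧ d (S (data i ω)) = e j := by
    intro i ω
    obtain ⟨j, hj1, hjm, hdj, hddj, hsle⟩ := hval _ (hSrange (data i ω))
    exact ⟨by rw [hTdef]; simp only; rw [hddj]; exact hsle, j, hj1, hjm, hddj, hdj⟩
  have hTd : ∀ (ω) (i : Fin n), T i.castSucc ω = d (S (data i.castSucc ω)) := by
    intro ω i
    obtain ⟨-, j, -, -, h1, h2⟩ := hTfacts i.castSucc ω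
    rw [h1, h2]
  -- real-valued counting functions
  set CntR : ℕ → Ω₁ → ℝ :=
    fun j ω => ∑ i : Fin n, if T i.castSucc ω ≤ e j then (1:ℝ) else 0 with hCntRdef
  have hCntRmeas : ∀ j, Measurable (CntR j) := fun j =>
    Finset.measurable_sum _ (fun i _ => Measurable.ite
      (measurableSet_le (hTmeas _) measurable_const) measurable_const measurable_const)
  have hCntRcard : ∀ j ω, CntR j ω =
      ((Finset.univ.filter fun i : Fin n => T i.castSucc ω ≤ e j).card : ℝ) := by
    intro j ω
    rw [hCntRdef]
    exact Finset.sum_boole _ _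
  -- the coverage event
  set Cov : Set Ω₁ :=
    {ω | ∀ j, 1 ≤ j → j ≤ m → c ≤ CntR j ω → T (Fin.last n) ω ≤ e j} with hCovdef
  have hCovm : MeasurableSet Cov := by
    have hrw : Cov = ⋂ j ∈ Finset.Icc 1 m,
        ({ω | c ≤ CntR j ω}ᶜ ∪ {ω | T (Fin.last n) ω ≤ e j}) := by
      ext ω
      simp only [hCovdef, Set.mem_setOf_eq, Set.mem_iInter, Finset.mem_Icc, Set.mem_union,
        Set.mem_compl_iff, not_le]
      constructor
      · intro h j hj
        rcases lt_or_ge (CntR j ω) c with h' | h'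
        · exact Or.inl h'
        · exact Or.inr (h j hj.1 hj.2 h')
      · intro h j hj1 hjm hc
        rcases h j ⟨hj1, hjm⟩ with h' | h'
        · linarith
        · exact h'
    rw [hrw]
    exact MeasurableSet.biInter (Finset.countable_toSet _) fun j _ =>
      ((measurableSet_le measurable_const (hCntRmeas j)).compl.union
        (measurableSet_le (hTmeas _) measurable_const))
  -- slice lower bound on the coverage event
  have hslice : ∀ ω₁ ∈ Cov, ENNReal.ofReal (1 - γ*α) ≤
      ν {ω₂ | S (data (Fin.last n) ω₁) ≤ A (fun i => S (data i.castSucc ω₁)) ω₂} := by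
    intro ω₁ hω₁
    set vv : Fin n → ℝ := fun i => S (data i.castSucc ω₁) with hvvdef
    have hvv : ∀ i, vv i ∈ Set.Ioc (0:ℝ) 1 := fun i => hSrange _
    have hTvv : ∀ i : Fin n, T i.castSucc ω₁ = d (vv i) := fun i => hTd ω₁ i
    have hvald : ∀ i : Fin n, ∃ j, 1 ≤ j ∧ j ≤ m ∧ d (vv i) = e j ∧ 0 < e j := by
      intro i
      obtain ⟨j, hj1, hjm, hdj, -, hsle⟩ := hval _ (hvv i)
      exact ⟨j, hj1, hjm, hdj, lt_of_lt_of_le (hvv i).1 hsle⟩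
    set Nle : ℕ → ℕ := fun j => Set.ncard {i : Fin n | d (vv i) ≤ e j} with hNledef
    have hcnt_eq : ∀ j : ℕ, CntR j ω₁ = (Nle j : ℝ) := by
      intro j
      rw [hCntRcard]
      have hfe : (Finset.univ.filter fun i : Fin n => T i.castSucc ω₁ ≤ e j)
          = (Finset.univ.filter fun i : Fin n => d (vv i) ≤ e j) := by
        apply Finset.filter_congr
        intro i _
        rw [hTvv i]
      rw [hfe]
      have h1 : {i : Fin n | d (vv i) ≤ e j}
          = ↑(Finset.univ.filter fun i : Fin n => d (vv i) ≤ e j) := by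
        ext i; simp
      rw [hNledef]
      simp only
      rw [h1, Set.ncard_coe_finset]
    have hgt_eq : ∀ j : ℕ,
        ((Set.ncard {i : Fin n | e j < d (vv i)} : ℕ) : ℝ) = (n:ℝ) - (Nle j : ℝ) := by
      intro j
      have hcompl : {i : Fin n | e j < d (vv i)} = {i : Fin n | d (vv i) ≤ e j}ᶜ := by
        ext i; simp [not_le]
      have hadd := Set.ncard_add_ncard_compl {i : Fin n | d (vv i) ≤ e j}
      rw [Nat.card_eq_fintype_card, Fintype.card_fin] at hadd
      have hadd' := congrArg (Nat.cast : ℕ → ℝ) hadd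
      push_cast at hadd'
      rw [hcompl]
      have hNl : (Nle j : ℝ) = ((Set.ncard {i : Fin n | d (vv i) ≤ e j} : ℕ) : ℝ) := by
        rw [hNledef]
      rw [hNl]
      linarith
    have hNlem : Nle m = n := by
      have huniv : {i : Fin n | d (vv i) ≤ e m} = Set.univ := by
        ext i
        simp only [Set.mem_setOf_eq, Set.mem_univ, iff_true]
        obtain ⟨j, hj1, hjm, hdj, -⟩ := hvald i
        rw [hdj]; exact emono j m hjm le_rfl
      rw [hNledef]
      simp only
      rw [huniv, Set.ncard_univ, Nat.card_eq_fintype_card, Fintype.card_fin]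
    set F := (Finset.Icc 1 m).filter (fun j => (n:ℝ)*tq ≤ (Nle j : ℝ)) with hFdef
    have hmF : m ∈ F := by
      refine Finset.mem_filter.mpr ⟨Finset.mem_Icc.mpr ⟨hm, le_rfl⟩, ?_⟩
      rw [hNlem]; nlinarith
    have hFne : F.Nonempty := ⟨m, hmF⟩
    set js := F.min' hFne with hjsdef
    have hjsF := F.min'_mem hFne
    obtain ⟨hjsIcc, hjsge⟩ := Finset.mem_filter.mp hjsF
    obtain ⟨hjs1, hjsm⟩ := Finset.mem_Icc.mp hjsIcc
    have hwjs : quantWeight e d tq vv js ≤ n := by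
      rw [quantWeight]
      apply max_le
      · have hsub : {i : Fin n | d (vv i) < e js} ⊆ {i : Fin n | d (vv i) ≤ e (js - 1)} := by
          intro i hi
          obtain ⟨j, hj1, hjm, hdj, -⟩ := hvald i
          simp only [Set.mem_setOf_eq] at hi ⊢
          rw [hdj] at hi ⊢
          have hjlt : j < js := by
            by_contra hle
            push_neg at hle
            exact absurd (emono js j hle hjm) (not_le.mpr hi)
          exact emono j (js-1) (by omega) (by omega)
        have hcard : ((Set.ncard {i : Fin n | d (vv i) < e js} : ℕ) : ℝ) ≤ (Nle (js-1) : ℝ) := by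
          have := Set.ncard_le_ncard hsub (Set.toFinite _)
          rw [hNledef]
          exact_mod_cast this
        have hlt : (Nle (js-1) : ℝ) ≤ (n:ℝ)*tq := by
          rcases eq_or_lt_of_le hjs1 with heq | hlt2
          · have hempty : {i : Fin n | d (vv i) ≤ e (js-1)} = ∅ := by
              ext i
              simp only [Set.mem_setOf_eq, Set.mem_empty_iff_false, iff_false, not_le]
              obtain ⟨j, hj1, hjm, hdj, hej0⟩ := hvald i
              rw [hdj]
              have : e (js - 1) = 0 := by
                rw [show js - 1 = 0 by omega]
                exact he0
              rw [this]
              exact hej0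
            have h0 : Nle (js - 1) = 0 := by
              rw [hNledef]; simp only; rw [hempty, Set.ncard_empty]
            rw [h0]
            push_cast
            nlinarith
          · have hnot : (js - 1) ∉ F := by
              intro hmem
              have := F.min'_le _ hmem
              omega
            have hnot' : ¬ ((n:ℝ)*tq ≤ (Nle (js-1) : ℝ)) := by
              intro hcon
              exact hnot (Finset.mem_filter.mpr
                ⟨Finset.mem_Icc.mpr ⟨by omega, by omega⟩, hcon⟩)
            linarith
        rw [div_le_iff₀ htq0]
        nlinarith
      · rw [div_le_iff₀ h1tq0]
        have := hgt_eq js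
        nlinarith
    set Z := ∑ j' ∈ Finset.Icc 1 m, Real.exp (-(ε/2) * quantWeight e d tq vv j') with hZdef
    have hZ1 : Real.exp (-(ε/2) * (n:ℝ)) ≤ Z := by
      have hstep : Real.exp (-(ε/2) * (n:ℝ)) ≤ Real.exp (-(ε/2) * quantWeight e d tq vv js) := by
        apply Real.exp_le_exp.mpr
        nlinarith [mul_le_mul_of_nonneg_left hwjs (by positivity : (0:ℝ) ≤ ε/2)]
      have hle2 : Real.exp (-(ε/2) * quantWeight e d tq vv js) ≤ Z := by
        rw [hZdef]
        exact Finset.single_le_sum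
          (f := fun j' => Real.exp (-(ε/2) * quantWeight e d tq vv j'))
          (fun j _ => (Real.exp_pos _).le) hjsIcc
      exact le_trans hstep hle2
    have hZ0 : 0 < Z := lt_of_lt_of_le (Real.exp_pos _) hZ1
    have hPsum : ∑ j ∈ Finset.Icc 1 m, mechProb m e d tq ε vv j = 1 := by
      simp only [mechProb]
      rw [← Finset.sum_div, ← hZdef]
      exact div_self (ne_of_gt hZ0)
    have hPnonneg : ∀ j, 0 ≤ mechProb m e d tq ε vv j := by
      intro j
      simp only [mechProb]
      rw [← hZdef]
      exact div_nonneg (Real.exp_pos _).le hZ0.le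
    have hPsmall : ∀ j, 1 ≤ j → j ≤ m → (Nle j : ℝ) < c →
        mechProb m e d tq ε vv j ≤ γ*α/m := by
      intro j hj1 hjm hNlt
      have hwj : (n:ℝ) + b ≤ quantWeight e d tq vv j := by
        have h1 : (n:ℝ) + b ≤ ((n:ℝ) - (Nle j : ℝ))/(1-tq) := by
          rw [le_div_iff₀ h1tq0]
          have hnc : (n:ℝ) - c = (1-tq)*((n:ℝ)+b) := by rw [hcdef]; ring
          nlinarith
        calc (n:ℝ)+b ≤ ((n:ℝ) - (Nle j : ℝ))/(1-tq) := h1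
          _ = ((Set.ncard {i : Fin n | e j < d (vv i)} : ℕ) : ℝ)/(1-tq) := by rw [hgt_eq j]
          _ ≤ quantWeight e d tq vv j := le_max_right _ _
      have hfrac : mechProb m e d tq ε vv j ≤
          Real.exp (-(ε/2) * ((n:ℝ)+b)) / Real.exp (-(ε/2) * (n:ℝ)) := by
        simp only [mechProb]
        rw [← hZdef]
        apply div_le_div₀ (Real.exp_pos _).le ?_ (Real.exp_pos _) hZ1
        apply Real.exp_le_exp.mpr
        nlinarith [mul_le_mul_of_nonneg_left hwj (by positivity : (0:ℝ) ≤ ε/2)]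
      have heq2 : Real.exp (-(ε/2)*((n:ℝ)+b)) / Real.exp (-(ε/2)*(n:ℝ)) = γ*α/(m:ℝ) := by
        rw [← Real.exp_sub]
        have harg : -(ε/2)*((n:ℝ)+b) - (-(ε/2)*(n:ℝ)) = -L := by
          rw [hbdef]
          field_simp
          ring
        rw [harg, Real.exp_neg, hLdef, Real.exp_log (by positivity), inv_div]
      rw [heq2] at hfrac
      exact hfrac
    set J := (Finset.Icc 1 m).filter (fun j => T (Fin.last n) ω₁ ≤ e j) with hJdef2
    have hJsub : J ⊆ Finset.Icc 1 m := Finset.filter_subset _ _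
    have hsumJ : 1 - γ*α ≤ ∑ j ∈ J, mechProb m e d tq ε vv j := by
      have hsplit : ∑ j ∈ Finset.Icc 1 m \ J, mechProb m e d tq ε vv j
          + ∑ j ∈ J, mechProb m e d tq ε vv j = 1 := by
        rw [Finset.sum_sdiff hJsub]; exact hPsum
      have hrest : ∑ j ∈ Finset.Icc 1 m \ J, mechProb m e d tq ε vv j ≤ γ*α := by
        have hle : ∀ j ∈ Finset.Icc 1 m \ J, mechProb m e d tq ε vv j ≤ γ*α/m := by
          intro j hj
          obtain ⟨hjIcc, hjnJ⟩ := Finset.mem_sdiff.mp hj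
          obtain ⟨hj1, hjm⟩ := Finset.mem_Icc.mp hjIcc
          have hTgt : e j < T (Fin.last n) ω₁ := by
            by_contra h
            push_neg at h
            exact hjnJ (Finset.mem_filter.mpr ⟨hjIcc, h⟩)
          have hNlt : (Nle j : ℝ) < c := by
            by_contra h
            push_neg at h
            have := hω₁ j hj1 hjm (by rw [hcnt_eq j]; exact h)
            linarith
          exact hPsmall j hj1 hjm hNlt
        calc ∑ j ∈ Finset.Icc 1 m \ J, mechProb m e d tq ε vv j
            ≤ (Finset.Icc 1 m \ J).card • (γ*α/m) := Finset.sum_le_card_nsmul _ _ _ hle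
          _ = ((Finset.Icc 1 m \ J).card : ℝ) * (γ*α/m) := nsmul_eq_mul _ _
          _ ≤ (m:ℝ) * (γ*α/m) := by
              apply mul_le_mul_of_nonneg_right ?_ (by positivity)
              have h1 : (Finset.Icc 1 m \ J).card ≤ (Finset.Icc 1 m).card :=
                Finset.card_le_card Finset.sdiff_subset
              have h2 : (Finset.Icc 1 m).card = m := by rw [Nat.card_Icc]; omega
              exact_mod_cast le_trans h1 (le_of_eq h2)
          _ = γ*α := by field_simp
      linarith
    have hAvmeas : Measurable (A vv) := hAmeas.comp (measurable_const.prodMk measurable_id)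
    have hdisj : (↑J : Set ℕ).PairwiseDisjoint (fun j => {ω₂ | A vv ω₂ = e j}) := by
      intro j hj j' hj' hne
      have hjm : j ≤ m := (Finset.mem_Icc.mp (hJsub (Finset.mem_coe.mp hj))).2
      have hj'm : j' ≤ m := (Finset.mem_Icc.mp (hJsub (Finset.mem_coe.mp hj'))).2
      apply Set.disjoint_left.mpr
      intro ω₂ h1 h2
      simp only [Set.mem_setOf_eq] at h1 h2
      have hej : e j = e j' := by rw [← h1, ← h2]
      rcases lt_or_gt_of_ne hne with hlt | hgt
      · exact absurd hej (ne_of_lt (estrict j j' hlt hj'm))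
      · exact absurd hej.symm (ne_of_lt (estrict j' j hgt hjm))
    have hsubset : (⋃ j ∈ J, {ω₂ | A vv ω₂ = e j}) ⊆
        {ω₂ | S (data (Fin.last n) ω₁) ≤ A vv ω₂} := by
      intro ω₂ hmem
      simp only [Set.mem_iUnion] at hmem
      obtain ⟨j, hjJ, hAe⟩ := hmem
      obtain ⟨hjIcc, hTle'⟩ := Finset.mem_filter.mp hjJ
      have hSle : S (data (Fin.last n) ω₁) ≤ T (Fin.last n) ω₁ := (hTfacts _ _).1
      simp only [Set.mem_setOf_eq] at hAe ⊢
      rw [hAe]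
      exact le_trans hSle hTle'
    calc ENNReal.ofReal (1 - γ*α)
        ≤ ENNReal.ofReal (∑ j ∈ J, mechProb m e d tq ε vv j) :=
          ENNReal.ofReal_le_ofReal hsumJ
      _ = ∑ j ∈ J, ENNReal.ofReal (mechProb m e d tq ε vv j) :=
          ENNReal.ofReal_sum_of_nonneg (fun j _ => hPnonneg j)
      _ = ∑ j ∈ J, ν {ω₂ | A vv ω₂ = e j} := by
          refine Finset.sum_congr rfl fun j hj => ?_
          obtain ⟨hj1, hjm⟩ := Finset.mem_Icc.mp (hJsub hj)
          exact (hA vv hvv j hj1 hjm).symm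
      _ = ν (⋃ j ∈ J, {ω₂ | A vv ω₂ = e j}) :=
          (measure_biUnion_finset hdisj
            (fun j _ => hAvmeas (measurableSet_singleton _))).symm
      _ ≤ ν {ω₂ | S (data (Fin.last n) ω₁) ≤ A vv ω₂} := measure_mono hsubset
  -- complement of the coverage event is contained in the bad exchangeability event
  set Abad : Set Ω₁ :=
    {ω | (Finset.univ.filter fun l => T (Fin.last n) ω ≤ T l ω).card ≤ t} with hAbaddef
  have hcompl_sub : Covᶜ ⊆ Abad := by
    intro ω hω
    simp only [hCovdef, Set.mem_compl_iff, Set.mem_setOf_eq] at hω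
    push_neg at hω
    obtain ⟨j, hj1, hjm, hcj, hTgt⟩ := hω
    set G := Finset.univ.filter (fun i : Fin n => T i.castSucc ω ≤ e j) with hG
    have hGcard : k ≤ G.card := by
      rw [hCntRcard] at hcj
      exact Nat.ceil_le.mpr hcj
    have hsub2 : (Finset.univ.filter fun l : Fin (n+1) => T (Fin.last n) ω ≤ T l ω)
        ⊆ Finset.univ \ G.image Fin.castSucc := by
      intro l hl
      rw [Finset.mem_sdiff]
      refine ⟨Finset.mem_univ _, fun hlim => ?_⟩
      obtain ⟨i, hiG, hieq⟩ := Finset.mem_image.mp hlim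
      have h1 : T (Fin.last n) ω ≤ T l ω := (Finset.mem_filter.mp hl).2
      have h2 : T i.castSucc ω ≤ e j := (Finset.mem_filter.mp hiG).2
      rw [hieq] at h2
      linarith
    have h3 := Finset.card_le_card hsub2
    rw [Finset.card_sdiff_of_subset (Finset.subset_univ _),
      Finset.card_image_of_injective _ (Fin.castSucc_injective n), Finset.card_univ,
      Fintype.card_fin] at h3
    show (Finset.univ.filter fun l => T (Fin.last n) ω ≤ T l ω).card ≤ t
    omega
  have hAbadb := exch_count μ T hTmeas hTind hTid t (Fin.last n)
  -- lower bound on μ Cov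
  have hCovlb : ENNReal.ofReal ((k:ℝ)/((n:ℝ)+1)) ≤ μ Cov := by
    have hAbadm : μ Abad ≤ ENNReal.ofReal ((t:ℝ)/((n:ℝ)+1)) := by
      have hcast : ENNReal.ofReal ((t:ℝ)/((n:ℝ)+1)) = (t : ℝ≥0∞) / (((n:ℕ)+1 : ℕ) : ℝ≥0∞) := by
        rw [ENNReal.ofReal_div_of_pos (by positivity), ENNReal.ofReal_natCast]
        congr 1
        rw [show ((n:ℝ)+1) = (((n:ℕ)+1 : ℕ) : ℝ) by push_cast; ring, ENNReal.ofReal_natCast]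
      rw [hcast, ENNReal.le_div_iff_mul_le (Or.inl (by simp)) (Or.inl (by simp))]
      rw [mul_comm]
      exact hAbadb
    have h1 := measure_add_measure_compl (μ := μ) hCovm
    rw [measure_univ] at h1
    have h2 : μ Covᶜ ≤ ENNReal.ofReal ((t:ℝ)/((n:ℝ)+1)) :=
      le_trans (measure_mono hcompl_sub) hAbadm
    have h3 : ENNReal.ofReal ((k:ℝ)/((n:ℝ)+1)) + μ Covᶜ ≤ μ Cov + μ Covᶜ := by
      rw [h1]
      calc ENNReal.ofReal ((k:ℝ)/((n:ℝ)+1)) + μ Covᶜ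
          ≤ ENNReal.ofReal ((k:ℝ)/((n:ℝ)+1)) + ENNReal.ofReal ((t:ℝ)/((n:ℝ)+1)) :=
            add_le_add le_rfl h2
        _ = ENNReal.ofReal ((k:ℝ)/((n:ℝ)+1) + (t:ℝ)/((n:ℝ)+1)) :=
            (ENNReal.ofReal_add (by positivity) (by positivity)).symm
        _ = 1 := by
            rw [← add_div]
            have hnum : (k:ℝ) + (t:ℝ) = (n:ℝ) + 1 := by
              exact_mod_cast hkt
            rw [hnum, div_self (by positivity), ENNReal.ofReal_one]
    exact (ENNReal.add_le_add_iff_right (measure_ne_top μ _)).mp h3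
  -- final assembly
  have hEmeas : MeasurableSet {ω : Ω₁ × Ω₂ | S (data (Fin.last n) ω.1) ≤
      A (fun i => S (data i.castSucc ω.1)) ω.2} := by
    have h1 : Measurable fun ω : Ω₁ × Ω₂ => S (data (Fin.last n) ω.1) :=
      (hS.comp (hdatameas _)).comp measurable_fst
    have h2 : Measurable fun ω : Ω₁ × Ω₂ => A (fun i => S (data i.castSucc ω.1)) ω.2 := by
      have hv' : Measurable fun ω : Ω₁ × Ω₂ => (fun i : Fin n => S (data i.castSucc ω.1)) :=
        measurable_pi_lambda _ (fun i => (hS.comp (hdatameas _)).comp measurable_fst)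
      exact hAmeas.comp (hv'.prodMk measurable_snd)
    exact measurableSet_le h1 h2
  rw [Measure.prod_apply hEmeas]
  have hpt : ∀ ω₁, Cov.indicator (fun _ => ENNReal.ofReal (1 - γ*α)) ω₁ ≤
      ν (Prod.mk ω₁ ⁻¹' {ω : Ω₁ × Ω₂ | S (data (Fin.last n) ω.1) ≤
        A (fun i => S (data i.castSucc ω.1)) ω.2}) := by
    intro ω₁
    by_cases h : ω₁ ∈ Cov
    · rw [Set.indicator_of_mem h]
      exact hslice ω₁ h
    · rw [Set.indicator_of_notMem h]
      exact zero_le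
  calc ENNReal.ofReal (1-α)
      ≤ ENNReal.ofReal (1-γ*α) * ENNReal.ofReal ((k:ℝ)/((n:ℝ)+1)) := by
        rw [← ENNReal.ofReal_mul (by linarith)]
        apply ENNReal.ofReal_le_ofReal
        have h1 : base ≤ (k:ℝ) := by nlinarith [mul_nonneg htq0.le hb0]
        have h3 : (1-γ*α) * (((n:ℝ)+1)*(1-α)/(1-γ*α)) = ((n:ℝ)+1)*(1-α) := by
          field_simp
        have h4 : (1-γ*α) * ((k:ℝ)/((n:ℝ)+1)) = (1-γ*α)*(k:ℝ)/((n:ℝ)+1) := by ring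
        rw [h4, le_div_iff₀ (by positivity)]
        nlinarith [mul_le_mul_of_nonneg_left h1 h1γα.le]
    _ ≤ ENNReal.ofReal (1-γ*α) * μ Cov := mul_le_mul_right hCovlb _
    _ = ∫⁻ ω₁, Cov.indicator (fun _ => ENNReal.ofReal (1-γ*α)) ω₁ ∂μ := by
        rw [lintegral_indicator_const hCovm]
    _ ≤ ∫⁻ ω₁, ν (Prod.mk ω₁ ⁻¹' {ω : Ω₁ × Ω₂ | S (data (Fin.last n) ω.1) ≤
        A (fun i => S (data i.castSucc ω.1)) ω.2}) ∂μ := lintegral_mono hpt
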